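/- Funk parabola of type 2: let y₀ ∈ (−1,1) and F = (f₀,g₀) ∈ B² with g₀ ≠ y₀. Put σ₂ = 1 − sgn(y₀−g₀)·y₀, B = −2f₀/σ₂, C = (f₀² + (y₀−g₀)² − 2|y₀−g₀|)/σ₂², E = 2|y₀−g₀|/σ₂, and for a point (x,y) set ȳ = 1 − sgn(y₀−g₀)·y. Let 𝓗 = {(x,y) ∈ ℝ² : x² + B·x·ȳ + C·ȳ² + E·ȳ = 0}. Then the set of points P = (x,y) ∈ B² with P ≠ F satisfying d_F(P,F) = ln ρ(y,y₀) equals 𝓗 ∩ B². -/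

import Mathlib

/-- The Funk distance on the open unit ball of Euclidean n-space:
`d_F(P,Q) = ln((√k − ⟨P, Q−P⟩)/(√k − ⟨Q, Q−P⟩))` with
`k = ⟨P, Q−P⟩² + (1 − ‖P‖²)‖Q−P‖²`. -/
noncomputable def funkDist {n : ℕ} (P Q : EuclideanSpace ℝ (Fin n)) : ℝ :=
  Real.log
    ((Real.sqrt ((inner ℝ P (Q - P) : ℝ) ^ 2 + (1 - ‖P‖ ^ 2) * ‖Q - P‖ ^ 2) - (inner ℝ P (Q - P) : ℝ)) /
     (Real.sqrt ((inner ℝ P (Q - P) : ℝ) ^ 2 + (1 - ‖P‖ ^ 2) * ‖Q - P‖ ^ 2) - (inner ℝ Q (Q - P) : ℝ)))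

/-- `ρ(ε,η) = (1 + sgn(ε−η)·ε)/(1 + sgn(ε−η)·η)`. -/
noncomputable def rho (ε η : ℝ) : ℝ :=
  (1 + Real.sign (ε - η) * ε) / (1 + Real.sign (ε - η) * η)

/-- The point `(a,b)` of the Euclidean plane. -/
def pt (a b : ℝ) : EuclideanSpace ℝ (Fin 2) := WithLp.toLp 2 ![a, b]

lemma norm_pt_sq (a b : ℝ) : ‖pt a b‖^2 = a^2 + b^2 := by
  rw [EuclideanSpace.norm_eq, Real.sq_sqrt (by positivity)]
  simp [Fin.sum_univ_two, pt, sq_abs]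

lemma norm_pt_lt (a b : ℝ) : ‖pt a b‖ < 1 ↔ a^2 + b^2 < 1 := by
  rw [← norm_pt_sq]
  constructor <;> intro h <;> nlinarith [norm_nonneg (pt a b)]

lemma pt_sub (a b c d : ℝ) : pt a b - pt c d = pt (a-c) (b-d) := by
  ext i; fin_cases i <;> simp [pt]

lemma inner_pt (a b c d : ℝ) : (inner ℝ (pt a b) (pt c d) : ℝ) = a*c + b*d := by
  simp [PiLp.inner_apply, Fin.sum_univ_two, pt, RCLike.inner_apply]
  ring

lemma pt_eq_iff (a b c d : ℝ) : pt a b = pt c d ↔ a = c ∧ b = d := by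
  constructor
  · intro h
    have h' := congrArg WithLp.ofLp h
    exact ⟨congrFun h' 0, congrFun h' 1⟩
  · rintro ⟨rfl, rfl⟩; rfl

lemma funkDist_pt (x y f g : ℝ) :
    funkDist (pt x y) (pt f g) =
      Real.log ((Real.sqrt ((x*(f-x)+y*(g-y))^2 + (1-(x^2+y^2))*((f-x)^2+(g-y)^2)) - (x*(f-x)+y*(g-y))) /
        (Real.sqrt ((x*(f-x)+y*(g-y))^2 + (1-(x^2+y^2))*((f-x)^2+(g-y)^2)) - (f*(f-x)+g*(g-y)))) := by
  rw [funkDist, pt_sub, inner_pt, inner_pt, norm_pt_sq, norm_pt_sq]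

lemma rho_neg (y y₀ : ℝ) : rho (-y) (-y₀) = rho y y₀ := by
  unfold rho
  rw [show (-y) - (-y₀) = -(y - y₀) by ring, Real.sign_neg]
  ring_nf

lemma rho_of_lt (y y₀ : ℝ) (h : y < y₀) : rho y y₀ = (1-y)/(1-y₀) := by
  unfold rho; rw [Real.sign_of_neg (by linarith : y - y₀ < 0)]; ring_nf

lemma rho_of_gt (y y₀ : ℝ) (h : y₀ < y) : rho y y₀ = (1+y)/(1+y₀) := by
  unfold rho; rw [Real.sign_of_pos (by linarith : 0 < y - y₀)]; ring_nf

lemma rho_self (y : ℝ) : rho y y = 1 := by unfold rho; simp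

lemma sq_pos' (r : ℝ) (h : r ≠ 0) : 0 < r^2 :=
  lt_of_le_of_ne (sq_nonneg r) (Ne.symm (pow_ne_zero 2 h))

lemma pos_factor (c w : ℝ) (hc : 0 < c) (h : 0 < c * w) : 0 < w := by
  by_contra hw
  push_neg at hw
  nlinarith

lemma lt_sqrt_of_sq_lt (b k : ℝ) (h : b^2 < k) : b < Real.sqrt k :=
  calc b ≤ |b| := le_abs_self b
  _ = Real.sqrt (b^2) := (Real.sqrt_sq_eq_abs b).symm
  _ < Real.sqrt k := Real.sqrt_lt_sqrt (sq_nonneg b) h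

set_option maxHeartbeats 2000000 in
lemma core_main (x y f₀ g₀ y₀ a b δ2 k Q : ℝ)
    (ha : a = x*(f₀-x)+y*(g₀-y)) (hb : b = f₀*(f₀-x)+g₀*(g₀-y))
    (hδ : δ2 = (f₀-x)^2+(g₀-y)^2) (hk : k = a^2 + (1-(x^2+y^2))*δ2)
    (hQdef : Q = (1-y₀)^2*x^2 - 2*f₀*(1-y₀)*x*(1-y) + (f₀^2+(y₀-g₀)^2-2*(y₀-g₀))*(1-y)^2
      + 2*(y₀-g₀)*(1-y₀)*(1-y))
    (hF : f₀^2 + g₀^2 < 1) (hP : x^2 + y^2 < 1)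
    (hy1 : -1 < y₀) (hy2 : y₀ < 1) (hD : g₀ < y₀) (hδ2 : 0 < δ2) :
    Real.log ((Real.sqrt k - a)/(Real.sqrt k - b)) = Real.log (rho y y₀) ↔ Q = 0 := by
  have hyl : -1 < y := by nlinarith [sq_nonneg x]
  have hyu : y < 1 := by nlinarith [sq_nonneg x]
  have hgu : g₀ < 1 := by nlinarith [sq_nonneg f₀]
  have hgl : -1 < g₀ := by nlinarith [sq_nonneg f₀]
  have hk0 : 0 < k := by nlinarith [sq_nonneg a]
  have hr2 : Real.sqrt k ^ 2 = k := Real.sq_sqrt hk0.le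
  have hrpos : 0 < Real.sqrt k := Real.sqrt_pos.2 hk0
  have hba : b - a = δ2 := by rw [ha, hb, hδ]; ring
  have hkb : b^2 < k := by
    have hid : k - b^2 = δ2*(1-(f₀^2+g₀^2)) := by rw [hk, hb, ha, hδ]; ring
    have h' : (0:ℝ) < 1-(f₀^2+g₀^2) := by linarith
    linarith [mul_pos hδ2 h']
  have hrb : b < Real.sqrt k := lt_sqrt_of_sq_lt b k hkb
  have hden : 0 < Real.sqrt k - b := by linarith
  have hnum : 0 < Real.sqrt k - a := by linarith
  have hratio : 0 < (Real.sqrt k - a)/(Real.sqrt k - b) := div_pos hnum hden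
  have hgt1 : 1 < (Real.sqrt k - a)/(Real.sqrt k - b) := (one_lt_div hden).2 (by linarith)
  rcases lt_trichotomy y y₀ with hlt | heq | hgt
  · -- main case: y < y₀
    have hrho : rho y y₀ = (1-y)/(1-y₀) := rho_of_lt y y₀ hlt
    have hrhopos : 0 < (1-y)/(1-y₀) := div_pos (by linarith) (by linarith)
    have hid3 : (b*(1-y) - a*(1-y₀))^2 - k*(y₀-y)^2 = δ2*Q := by
      rw [hQdef, hk, hb, ha, hδ]; ring
    constructor
    · intro heq
      rw [hrho] at heq
      have hratio_eq : (Real.sqrt k - a)/(Real.sqrt k - b) = (1-y)/(1-y₀) :=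
        Real.log_injOn_pos (Set.mem_Ioi.2 hratio) (Set.mem_Ioi.2 hrhopos) heq
      rw [div_eq_div_iff hden.ne' (by linarith : (1:ℝ)-y₀ ≠ 0)] at hratio_eq
      have h1 : Real.sqrt k * (y₀-y) = b*(1-y) - a*(1-y₀) := by linear_combination -hratio_eq
      have hw2 : (b*(1-y) - a*(1-y₀))^2 = k*(y₀-y)^2 := by
        rw [← h1, mul_pow, hr2]
      have h0 : δ2 * Q = 0 := by linarith
      exact (mul_eq_zero.1 h0).resolve_left hδ2.ne'
    · intro hQ0
      have hw2 : (b*(1-y) - a*(1-y₀))^2 = k*(y₀-y)^2 := by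
        rw [hQ0, mul_zero] at hid3; linarith
      have hid6 : δ2*(2*(y₀-y)*a*(1-y) + (1-y)^2*δ2 - (1-(x^2+y^2))*(y₀-y)^2)
          = (b*(1-y) - a*(1-y₀))^2 - k*(y₀-y)^2 := by
        rw [hk, hb, ha, hδ]; ring
      have h6 : 2*(y₀-y)*a*(1-y) + (1-y)^2*δ2 - (1-(x^2+y^2))*(y₀-y)^2 = 0 := by
        rw [hw2] at hid6
        have h0 : δ2*(2*(y₀-y)*a*(1-y) + (1-y)^2*δ2 - (1-(x^2+y^2))*(y₀-y)^2) = 0 := by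
          linarith
        exact (mul_eq_zero.1 h0).resolve_left hδ2.ne'
      have h2w : 2*(1-y)*(b*(1-y) - a*(1-y₀)) = (1-(x^2+y^2))*(y₀-y)^2 + (1-y)^2*δ2 := by
        linear_combination h6 + 2*(1-y)^2*hba
      have hΔ2 : 0 < (y₀-y)^2 := sq_pos' (y₀-y) (by intro hc; nlinarith)
      have hwpos : 0 < b*(1-y) - a*(1-y₀) := by
        refine pos_factor (2*(1-y)) _ (by linarith) ?_
        have h8 : 0 < (1-(x^2+y^2))*(y₀-y)^2 := mul_pos (by linarith) hΔ2
        have h9 : 0 < (1-y)^2*δ2 := mul_pos (sq_pos' (1-y) (by intro hc; nlinarith)) hδ2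
        linarith
      have h1 : Real.sqrt k * (y₀-y) = b*(1-y) - a*(1-y₀) := by
        have hsq : (Real.sqrt k * (y₀-y))^2 = (b*(1-y) - a*(1-y₀))^2 := by
          rw [mul_pow, hr2, hw2]
        have hfac : (Real.sqrt k * (y₀-y) - (b*(1-y) - a*(1-y₀)))
            * (Real.sqrt k * (y₀-y) + (b*(1-y) - a*(1-y₀))) = 0 := by
          linear_combination hsq
        rcases mul_eq_zero.1 hfac with h | h
        · linarith
        · exfalso
          have : 0 < Real.sqrt k * (y₀-y) := mul_pos hrpos (by linarith)
          linarith
      have : (Real.sqrt k - a)/(Real.sqrt k - b) = (1-y)/(1-y₀) := by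
        rw [div_eq_div_iff hden.ne' (by linarith : (1:ℝ)-y₀ ≠ 0)]
        linear_combination -h1
      rw [hrho, this]
  · -- y = y₀ : both sides false
    have hQval : Q = ((1-y₀)*x - f₀*(1-y₀))^2 + (y₀-g₀)^2*(1-y₀)^2 := by
      rw [hQdef, heq]; ring
    have hQpos : 0 < Q := by
      rw [hQval]
      have h1 : 0 < (y₀-g₀)^2*(1-y₀)^2 :=
        mul_pos (sq_pos' (y₀-g₀) (by intro hc; nlinarith)) (sq_pos' (1-y₀) (by intro hc; nlinarith))
      linarith [sq_nonneg ((1-y₀)*x - f₀*(1-y₀))]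
    rw [heq, rho_self]
    constructor
    · intro hlog
      rw [Real.log_one] at hlog
      exact absurd hlog (Real.log_pos hgt1).ne'
    · intro hQ0
      exact absurd hQ0 hQpos.ne'
  · -- y > y₀ : both sides false
    have hrho : rho y y₀ = (1+y)/(1+y₀) := rho_of_gt y y₀ hgt
    have hQdec : Q = ((1-y₀)*x - f₀*(1-y))^2 + (y₀-g₀)^2*(1-y)^2
        + ((y₀-g₀)*(1-y))*(2*(y-y₀)) := by
      rw [hQdef]; ring
    have hQpos : 0 < Q := by
      rw [hQdec]
      have h1 : 0 < (y₀-g₀)^2*(1-y)^2 :=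
        mul_pos (sq_pos' (y₀-g₀) (by intro hc; nlinarith)) (sq_pos' (1-y) (by intro hc; nlinarith))
      have h2 : 0 < ((y₀-g₀)*(1-y))*(2*(y-y₀)) :=
        mul_pos (mul_pos (by linarith) (by linarith)) (by linarith)
      linarith [sq_nonneg ((1-y₀)*x - f₀*(1-y))]
    constructor
    · intro heq
      exfalso
      rw [hrho] at heq
      have hrhopos : 0 < (1+y)/(1+y₀) := div_pos (by linarith) (by linarith)
      have hratio_eq : (Real.sqrt k - a)/(Real.sqrt k - b) = (1+y)/(1+y₀) :=
        Real.log_injOn_pos (Set.mem_Ioi.2 hratio) (Set.mem_Ioi.2 hrhopos) heq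
      rw [div_eq_div_iff hden.ne' (by linarith : (1:ℝ)+y₀ ≠ 0)] at hratio_eq
      have h1 : Real.sqrt k * (y-y₀) = b*(1+y) - a*(1+y₀) := by linear_combination -hratio_eq
      have hw2 : (b*(1+y) - a*(1+y₀))^2 = k*(y-y₀)^2 := by rw [← h1, mul_pow, hr2]
      have hid2 : (b*(1+y) - a*(1+y₀))^2 - k*(y-y₀)^2
          = δ2*((x*(1+y₀) - f₀*(1+y))^2 + (y₀-g₀)*(1+y)*((1-g₀)*(y-y₀)+(1+y₀)*(y-g₀))) := by
        rw [hk, hb, ha, hδ]; ring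
      have h3 : 0 < (1-g₀)*(y-y₀)+(1+y₀)*(y-g₀) := by
        have h4 : 0 < (1-g₀)*(y-y₀) := mul_pos (by linarith) (by linarith)
        have h5 : 0 < (1+y₀)*(y-g₀) := mul_pos (by linarith) (by linarith)
        linarith
      have hpos : 0 < (x*(1+y₀) - f₀*(1+y))^2 + (y₀-g₀)*(1+y)*((1-g₀)*(y-y₀)+(1+y₀)*(y-g₀)) := by
        have h4 : 0 < (y₀-g₀)*(1+y)*((1-g₀)*(y-y₀)+(1+y₀)*(y-g₀)) :=
          mul_pos (mul_pos (by linarith) (by linarith)) h3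
        linarith [sq_nonneg (x*(1+y₀) - f₀*(1+y))]
      linarith [mul_pos hδ2 hpos]
    · intro hQ0
      exact absurd hQ0 hQpos.ne'

set_option maxHeartbeats 1000000 in
lemma core (x y f₀ g₀ y₀ : ℝ) (hF : f₀^2 + g₀^2 < 1) (hP : x^2 + y^2 < 1)
    (hy1 : -1 < y₀) (hy2 : y₀ < 1) (hD : g₀ < y₀) :
    (¬(x = f₀ ∧ y = g₀) ∧
      Real.log ((Real.sqrt ((x*(f₀-x)+y*(g₀-y))^2 + (1-(x^2+y^2))*((f₀-x)^2+(g₀-y)^2)) - (x*(f₀-x)+y*(g₀-y))) /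
        (Real.sqrt ((x*(f₀-x)+y*(g₀-y))^2 + (1-(x^2+y^2))*((f₀-x)^2+(g₀-y)^2)) - (f₀*(f₀-x)+g₀*(g₀-y)))) =
        Real.log (rho y y₀)) ↔
    (1-y₀)^2*x^2 - 2*f₀*(1-y₀)*x*(1-y) + (f₀^2+(y₀-g₀)^2-2*(y₀-g₀))*(1-y)^2
      + 2*(y₀-g₀)*(1-y₀)*(1-y) = 0 := by
  set a := x*(f₀-x)+y*(g₀-y) with ha
  set b := f₀*(f₀-x)+g₀*(g₀-y) with hb
  set δ2 := (f₀-x)^2+(g₀-y)^2 with hδ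
  set k := a^2 + (1-(x^2+y^2))*δ2 with hk
  set Q := (1-y₀)^2*x^2 - 2*f₀*(1-y₀)*x*(1-y) + (f₀^2+(y₀-g₀)^2-2*(y₀-g₀))*(1-y)^2
      + 2*(y₀-g₀)*(1-y₀)*(1-y) with hQdef
  clear_value a b δ2 k Q
  have hne_iff : (¬(x = f₀ ∧ y = g₀)) ↔ 0 < δ2 := by
    constructor
    · intro h
      rw [hδ]
      rcases eq_or_ne x f₀ with hx | hx
      · have hy' : y ≠ g₀ := fun hy' => h ⟨hx, hy'⟩
        have h2 : (g₀ - y) ≠ 0 := fun hc => hy' (by linarith)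
        linarith [sq_nonneg (f₀-x), sq_pos' _ h2]
      · have h2 : (f₀ - x) ≠ 0 := fun hc => hx (by linarith)
        linarith [sq_nonneg (g₀-y), sq_pos' _ h2]
    · intro h hc
      obtain ⟨rfl, rfl⟩ := hc
      rw [hδ] at h
      nlinarith [h]
  constructor
  · rintro ⟨hne, heq⟩
    exact (core_main x y f₀ g₀ y₀ a b δ2 k Q ha hb hδ hk hQdef hF hP hy1 hy2 hD
      (hne_iff.1 hne)).1 heq
  · intro hQ
    have hδ2 : 0 < δ2 := by
      rcases lt_or_eq_of_le (by rw [hδ]; positivity : (0:ℝ) ≤ δ2) with h | h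
      · exact h
      · exfalso
        have h' : (f₀-x)^2+(g₀-y)^2 = 0 := by rw [← hδ, ← h]
        have hx : x = f₀ := by nlinarith [sq_nonneg (f₀-x), sq_nonneg (g₀-y)]
        have hy : y = g₀ := by nlinarith [sq_nonneg (f₀-x), sq_nonneg (g₀-y)]
        subst hx; subst hy
        have hzero : (y₀-y)^2*(x^2+y^2-1) = 0 := by linear_combination hQ - hQdef
        have hne0 : 0 < (y₀-y)^2 := sq_pos' (y₀-y) (by intro hc; nlinarith)
        nlinarith
    exact ⟨hne_iff.2 hδ2, (core_main x y f₀ g₀ y₀ a b δ2 k Q ha hb hδ hk hQdef hF hP hy1 hy2 hD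
      hδ2).2 hQ⟩

/-- The (non-degenerate) type-2 Funk parabola with focus `F = (f₀,g₀)` and directrix
`y = y₀` is the intersection with the unit disk of the Euclidean hyperbola
`x² + Bxȳ + Cȳ² + Eȳ = 0` in `x` and `ȳ = 1 − sgn(y₀−g₀)·y`. -/
theorem funk_parabola_stmt10 (y₀ f₀ g₀ s σ₂ B C E : ℝ)
    (hy₀ : -1 < y₀ ∧ y₀ < 1) (hF : ‖pt f₀ g₀‖ < 1) (hgy : g₀ ≠ y₀)
    (hs : s = Real.sign (y₀ - g₀)) (hσ : σ₂ = 1 - s * y₀)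
    (hB : B = -2 * f₀ / σ₂)
    (hC : C = (f₀ ^ 2 + (y₀ - g₀) ^ 2 - 2 * |y₀ - g₀|) / σ₂ ^ 2)
    (hE : E = 2 * |y₀ - g₀| / σ₂) :
    {p : ℝ × ℝ | ‖pt p.1 p.2‖ < 1 ∧ pt p.1 p.2 ≠ pt f₀ g₀ ∧
        funkDist (pt p.1 p.2) (pt f₀ g₀) = Real.log (rho p.2 y₀)} =
      {p : ℝ × ℝ | p.1 ^ 2 + B * p.1 * (1 - s * p.2) + C * (1 - s * p.2) ^ 2
          + E * (1 - s * p.2) = 0} ∩ {p : ℝ × ℝ | ‖pt p.1 p.2‖ < 1} := by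
  obtain ⟨hy1, hy2⟩ := hy₀
  have hFd : f₀^2 + g₀^2 < 1 := (norm_pt_lt f₀ g₀).1 hF
  ext ⟨x, y⟩
  simp only [Set.mem_setOf_eq, Set.mem_inter_iff, norm_pt_lt, ne_eq, pt_eq_iff, funkDist_pt]
  rcases hgy.lt_or_gt with hcase | hcase
  · -- g₀ < y₀, s = 1
    have hs1 : s = 1 := by rw [hs, Real.sign_of_pos (by linarith : (0:ℝ) < y₀ - g₀)]
    have hσ2 : σ₂ = 1 - y₀ := by rw [hσ, hs1]; ring
    have hσne : (1:ℝ) - y₀ ≠ 0 := by intro h; linarith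
    have habs : |y₀ - g₀| = y₀ - g₀ := abs_of_pos (by linarith)
    have hconv : x^2 + B*x*(1-s*y) + C*(1-s*y)^2 + E*(1-s*y)
        = ((1-y₀)^2*x^2 - 2*f₀*(1-y₀)*x*(1-y) + (f₀^2+(y₀-g₀)^2-2*(y₀-g₀))*(1-y)^2
          + 2*(y₀-g₀)*(1-y₀)*(1-y)) / (1-y₀)^2 := by
      rw [hB, hC, hE, hσ2, hs1, habs]
      field_simp
      ring
    constructor
    · rintro ⟨hP, hne, heq⟩
      refine ⟨?_, hP⟩
      rw [hconv, div_eq_zero_iff]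
      exact Or.inl ((core x y f₀ g₀ y₀ hFd hP hy1 hy2 hcase).1 ⟨hne, heq⟩)
    · rintro ⟨hEq, hP⟩
      rw [hconv, div_eq_zero_iff] at hEq
      have hQ := hEq.resolve_right (pow_ne_zero 2 hσne)
      obtain ⟨hne, heq⟩ := (core x y f₀ g₀ y₀ hFd hP hy1 hy2 hcase).2 hQ
      exact ⟨hP, hne, heq⟩
  · -- y₀ < g₀, s = -1
    have hs1 : s = -1 := by rw [hs, Real.sign_of_neg (by linarith : y₀ - g₀ < 0)]
    have hσ2 : σ₂ = 1 + y₀ := by rw [hσ, hs1]; ring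
    have hσne : (1:ℝ) + y₀ ≠ 0 := by intro h; linarith
    have habs : |y₀ - g₀| = g₀ - y₀ := by
      rw [abs_of_neg (by linarith : y₀ - g₀ < 0)]; ring
    have hconv : x^2 + B*x*(1-s*y) + C*(1-s*y)^2 + E*(1-s*y)
        = ((1-(-y₀))^2*x^2 - 2*f₀*(1-(-y₀))*x*(1-(-y))
          + (f₀^2+((-y₀)-(-g₀))^2-2*((-y₀)-(-g₀)))*(1-(-y))^2
          + 2*((-y₀)-(-g₀))*(1-(-y₀))*(1-(-y))) / (1+y₀)^2 := by
      rw [hB, hC, hE, hσ2, hs1, habs]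
      field_simp
      ring
    have hcore : ∀ hP : x^2 + y^2 < 1,
        ((¬(x = f₀ ∧ y = g₀) ∧
          Real.log ((Real.sqrt ((x*(f₀-x)+y*(g₀-y))^2 + (1-(x^2+y^2))*((f₀-x)^2+(g₀-y)^2)) - (x*(f₀-x)+y*(g₀-y))) /
            (Real.sqrt ((x*(f₀-x)+y*(g₀-y))^2 + (1-(x^2+y^2))*((f₀-x)^2+(g₀-y)^2)) - (f₀*(f₀-x)+g₀*(g₀-y)))) =
            Real.log (rho y y₀)) ↔
        (1-(-y₀))^2*x^2 - 2*f₀*(1-(-y₀))*x*(1-(-y))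
          + (f₀^2+((-y₀)-(-g₀))^2-2*((-y₀)-(-g₀)))*(1-(-y))^2
          + 2*((-y₀)-(-g₀))*(1-(-y₀))*(1-(-y)) = 0) := by
      intro hP
      have hiff := core x (-y) f₀ (-g₀) (-y₀)
        (by nlinarith : f₀^2 + (-g₀)^2 < 1)
        (by nlinarith : x^2 + (-y)^2 < 1)
        (by linarith) (by linarith) (by linarith)
      rw [show (x*(f₀-x)+(-y)*((-g₀)-(-y)))^2 + (1-(x^2+(-y)^2))*((f₀-x)^2+((-g₀)-(-y))^2)
            = (x*(f₀-x)+y*(g₀-y))^2 + (1-(x^2+y^2))*((f₀-x)^2+(g₀-y)^2) from by ring,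
          show x*(f₀-x)+(-y)*((-g₀)-(-y)) = x*(f₀-x)+y*(g₀-y) from by ring,
          show f₀*(f₀-x)+(-g₀)*((-g₀)-(-y)) = f₀*(f₀-x)+g₀*(g₀-y) from by ring,
          rho_neg, show ((-y:ℝ) = -g₀) ↔ (y = g₀) from neg_inj] at hiff
      exact hiff
    constructor
    · rintro ⟨hP, hne, heq⟩
      refine ⟨?_, hP⟩
      rw [hconv, div_eq_zero_iff]
      exact Or.inl ((hcore hP).1 ⟨hne, heq⟩)
    · rintro ⟨hEq, hP⟩
      rw [hconv, div_eq_zero_iff] at hEq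
      have hQ := hEq.resolve_right (pow_ne_zero 2 hσne)
      obtain ⟨hne, heq⟩ := (hcore hP).2 hQ
      exact ⟨hP, hne, heq⟩
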